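/- Let S and A be finite nonempty types, γ ∈ [0,1) a real discount factor, and P : S × A → S → ℝ a transition kernel such that for every (s,a), the vector P(s,a) has nonnegative entries summing to 1. For a deterministic policy π : S → A and reward r : S × A → ℝ, let Q^{π,r} : S × A → ℝ denote the unique function satisfying the Bellman equation Q^{π,r}(s,a) = r(s,a) + γ·∑_{s'∈S} P(s,a)(s')·Q^{π,r}(s', π(s')) for all (s,a). Let d ∈ ℕ, φ : S × A → ℝ^d with ‖φ(s,a)‖₂ ≤ φ_max for all (s,a), and for a policy π let Ψ^π : S × A → ℝ^d denote the unique function satisfying Ψ^π(s,a) = φ(s,a) + γ·∑_{s'} P(s,a)(s')·Ψ^π(s', π(s')). Let π_j : S → A be a policy, w' ∈ ℝ^d, r' : S × A → ℝ with |⟨φ(s,a), w'⟩ − r'(s,a)| ≤ δ_r for all (s,a), and let Ψ̃ : S × A → ℝ^d satisfy ‖Ψ̃(s,a) − Ψ^{π_j}(s,a)‖₂ ≤ δ_Ψ for all (s,a). Then for every (s,a), |⟨Ψ̃(s,a), w'⟩ − Q^{π_j, r'}(s,a)| ≤ ‖w'‖₂·δ_Ψ + δ_r/(1−γ). -/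

import Mathlib

theorem approx_value_error_bound {S A : Type*} [Fintype S] [Nonempty S]
    [Fintype A] [Nonempty A]
    (γ : ℝ) (hγ0 : 0 ≤ γ) (hγ1 : γ < 1)
    (P : S × A → S → ℝ)
    (hP0 : ∀ (sa : S × A) (s' : S), 0 ≤ P sa s')
    (hP1 : ∀ sa : S × A, ∑ s' : S, P sa s' = 1)
    (d : ℕ) (φ : S × A → EuclideanSpace ℝ (Fin d)) (φmax : ℝ)
    (hφ : ∀ sa : S × A, ‖φ sa‖ ≤ φmax)
    (πj : S → A) (w' : EuclideanSpace ℝ (Fin d)) (r' : S × A → ℝ)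
    (δr δΨ : ℝ)
    (Q : S × A → ℝ)
    (hQ : ∀ sa : S × A, Q sa = r' sa + γ * ∑ s' : S, P sa s' * Q (s', πj s'))
    (Ψ : S × A → EuclideanSpace ℝ (Fin d))
    (hΨ : ∀ sa : S × A, Ψ sa = φ sa + γ • ∑ s' : S, P sa s' • Ψ (s', πj s'))
    (hr : ∀ sa : S × A, |(inner ℝ (φ sa) w' : ℝ) - r' sa| ≤ δr)
    (Ψt : S × A → EuclideanSpace ℝ (Fin d))
    (hΨt : ∀ sa : S × A, ‖Ψt sa - Ψ sa‖ ≤ δΨ) :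
    ∀ sa : S × A, |(inner ℝ (Ψt sa) w' : ℝ) - Q sa| ≤ ‖w'‖ * δΨ + δr / (1 - γ) := by
  set g : S × A → ℝ := fun sa => (inner ℝ (Ψ sa) w' : ℝ) - Q sa with hg
  have hge : ∀ sa : S × A, g sa = ((inner ℝ (φ sa) w' : ℝ) - r' sa)
      + γ * ∑ s' : S, P sa s' * g (s', πj s') := by
    intro sa
    have h1 : (inner ℝ (Ψ sa) w' : ℝ)
        = (inner ℝ (φ sa) w' : ℝ) + γ * ∑ s' : S, P sa s' * (inner ℝ (Ψ (s', πj s')) w' : ℝ) := by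
      rw [hΨ sa, inner_add_left, real_inner_smul_left, sum_inner]
      simp only [real_inner_smul_left]
    have expand : ∑ s' : S, P sa s' * ((inner ℝ (Ψ (s', πj s')) w' : ℝ) - Q (s', πj s'))
        = (∑ s' : S, P sa s' * (inner ℝ (Ψ (s', πj s')) w' : ℝ))
          - ∑ s' : S, P sa s' * Q (s', πj s') := by
      rw [← Finset.sum_sub_distrib]
      apply Finset.sum_congr rfl; intro x _; ring
    simp only [hg]
    rw [h1, hQ sa, expand]
    ring
  set M : ℝ := Finset.univ.sup' (Finset.univ_nonempty) (fun sa : S × A => |g sa|) with hM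
  have hMle : ∀ sa : S × A, |g sa| ≤ M := fun sa => by
    rw [hM]; exact Finset.le_sup' (fun sa : S × A => |g sa|) (Finset.mem_univ sa)
  obtain ⟨sa0, _, hsa0⟩ := Finset.exists_mem_eq_sup' (Finset.univ_nonempty)
      (fun sa : S × A => |g sa|)
  have hMbound : M ≤ δr + γ * M := by
    have h0 : M = |g sa0| := by rw [hM, hsa0]
    refine le_trans (le_of_eq h0) ?_
    calc |g sa0| ≤ |(inner ℝ (φ sa0) w' : ℝ) - r' sa0|
          + |γ * ∑ s' : S, P sa0 s' * g (s', πj s')| := by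
            rw [hge sa0]; exact abs_add_le _ _
      _ ≤ δr + γ * M := by
          gcongr
          · exact hr sa0
          · rw [abs_mul, abs_of_nonneg hγ0]
            gcongr
            calc |∑ s' : S, P sa0 s' * g (s', πj s')|
                ≤ ∑ s' : S, |P sa0 s' * g (s', πj s')| := Finset.abs_sum_le_sum_abs _ _
              _ ≤ ∑ s' : S, P sa0 s' * M := by
                  apply Finset.sum_le_sum; intro x _
                  rw [abs_mul, abs_of_nonneg (hP0 sa0 x)]
                  exact mul_le_mul_of_nonneg_left (hMle _) (hP0 sa0 x)
              _ = M := by rw [← Finset.sum_mul, hP1, one_mul]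
  have hMfin : M ≤ δr / (1 - γ) := by
    rw [le_div_iff₀ (by linarith)]
    nlinarith
  intro sa
  have key : (inner ℝ (Ψt sa) w' : ℝ) - Q sa = (inner ℝ (Ψt sa - Ψ sa) w' : ℝ) + g sa := by
    simp [hg, inner_sub_left]
  rw [key]
  calc |(inner ℝ (Ψt sa - Ψ sa) w' : ℝ) + g sa|
      ≤ |(inner ℝ (Ψt sa - Ψ sa) w' : ℝ)| + |g sa| := abs_add_le _ _
    _ ≤ ‖Ψt sa - Ψ sa‖ * ‖w'‖ + δr / (1 - γ) := by
        gcongr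
        · exact abs_real_inner_le_norm _ _
        · exact (hMle sa).trans hMfin
    _ ≤ ‖w'‖ * δΨ + δr / (1 - γ) := by
        have h := hΨt sa
        nlinarith [norm_nonneg w', norm_nonneg (Ψt sa - Ψ sa)]
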